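/- (Explicit fiber eigenfunctions via the confluent hypergeometric function) Let b > 0, k ∈ ℝ and λ < b, and set a = 1/2 − λ/(2b) > 0. Define v(r) = e^{−b·r²/4}·r^{k}·U(a, k+1, b·r²/2) for r > 0. Then v is twice differentiable on (0,∞) and satisfies −v''(r) − v'(r)/r + (k/r − b·r/2)²·v(r) = λ·v(r) for all r > 0. -/

import Mathlib

open MeasureTheory Real Set Filter Topology

noncomputable def Gfun (a p z : ℝ) : ℝ :=
  ∫ t in Set.Ioi (0:ℝ), Real.exp (-z * t) * t ^ (a - 1) * (1 + t) ^ p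

lemma contOnG (a p z : ℝ) :
    ContinuousOn (fun t : ℝ => Real.exp (-z * t) * t ^ (a - 1) * (1 + t) ^ p) (Set.Ioi 0) := by
  intro t ht
  have h1 : ContinuousAt (fun t : ℝ => Real.exp (-z * t)) t :=
    (Real.continuous_exp.comp (continuous_const.mul continuous_id)).continuousAt
  have h2 : ContinuousAt (fun t : ℝ => t ^ (a - 1)) t :=
    Real.continuousAt_rpow_const _ _ (Or.inl (ne_of_gt ht))
  have h3 : ContinuousAt (fun t : ℝ => (1 + t) ^ p) t := by
    have : ContinuousAt (fun y : ℝ => y ^ p) (1 + t) :=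
      Real.continuousAt_rpow_const _ _ (Or.inl (ne_of_gt (by have := Set.mem_Ioi.mp ht; linarith)))
    exact this.comp (continuous_const.add continuous_id).continuousAt
  exact ((h1.mul h2).mul h3).continuousWithinAt

lemma tendG (s p : ℝ) {z : ℝ} (hz : 0 < z) :
    Tendsto (fun t : ℝ => Real.exp (-z * t) * t ^ s * (1 + t) ^ p) atTop (𝓝 0) := by
  have h1 := tendsto_rpow_mul_exp_neg_mul_atTop_nhds_zero s (z/2) (by linarith)
  have h2 := tendsto_rpow_mul_exp_neg_mul_atTop_nhds_zero p (z/2) (by linarith)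
  have h2' : Tendsto (fun t : ℝ => (1+t) ^ p * Real.exp (-(z/2) * (1+t))) atTop (𝓝 0) :=
    h2.comp (tendsto_atTop_add_const_left _ 1 tendsto_id)
  have h3 := (h1.mul h2').mul_const (Real.exp (z/2))
  rw [zero_mul, zero_mul] at h3
  refine h3.congr fun t => ?_
  rw [show (-z*t) = (-(z/2)*t) + (-(z/2)*(1+t)) + z/2 by ring, Real.exp_add, Real.exp_add]
  ring

lemma integrableG {a : ℝ} (p : ℝ) {z : ℝ} (ha : 0 < a) (hz : 0 < z) :
    IntegrableOn (fun t : ℝ => Real.exp (-z * t) * t ^ (a - 1) * (1 + t) ^ p) (Set.Ioi 0) := by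
  have hsplit : Set.Ioc (0:ℝ) 1 ∪ Set.Ioi 1 = Set.Ioi 0 := Set.Ioc_union_Ioi_eq_Ioi zero_le_one
  rw [← hsplit]
  apply MeasureTheory.IntegrableOn.union
  · -- on Ioc 0 1
    have hint : IntegrableOn (fun t : ℝ => (2:ℝ) ^ |p| * t ^ (a-1)) (Set.Ioc 0 1) := by
      refine Integrable.const_mul ?_ _
      have h := intervalIntegral.intervalIntegrable_rpow' (r := a-1) (a := (0:ℝ)) (b := 1) (by linarith : (-1:ℝ) < a-1)
      rw [intervalIntegrable_iff_integrableOn_Ioc_of_le zero_le_one] at h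
      exact h
    refine hint.mono' (((contOnG a p z).mono Set.Ioc_subset_Ioi_self).aestronglyMeasurable
      measurableSet_Ioc) ?_
    refine (MeasureTheory.ae_restrict_iff' measurableSet_Ioc).2 (Filter.Eventually.of_forall ?_)
    rintro t ⟨ht0, ht1⟩
    have h1 : Real.exp (-z*t) ≤ 1 := Real.exp_le_one_iff.2 (by nlinarith)
    have h2 : (1+t) ^ p ≤ 2 ^ |p| := by
      calc (1+t) ^ p ≤ (1+t) ^ |p| :=
            Real.rpow_le_rpow_of_exponent_le (by linarith) (le_abs_self p)
        _ ≤ 2 ^ |p| := Real.rpow_le_rpow (by linarith) (by linarith) (abs_nonneg p)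
    have hnn : (0:ℝ) ≤ t ^ (a-1) := Real.rpow_nonneg ht0.le _
    have hnn2 : (0:ℝ) ≤ (1+t) ^ p := Real.rpow_nonneg (by linarith) _
    rw [Real.norm_eq_abs, abs_of_nonneg (by positivity)]
    calc Real.exp (-z*t) * t ^ (a-1) * (1+t)^p ≤ 1 * t ^ (a-1) * (2 ^ |p|) := by
          apply mul_le_mul _ h2 hnn2 (by positivity)
          exact mul_le_mul_of_nonneg_right h1 hnn
      _ = 2 ^ |p| * t ^ (a-1) := by ring
  · -- on Ioi 1
    refine integrable_of_isBigO_exp_neg (b := z/2) (by linarith)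
      ((contOnG a p z).mono fun t ht => lt_of_lt_of_le one_pos (Set.mem_Ici.mp ht)) ?_
    refine Asymptotics.isBigO_of_div_tendsto_nhds
      (Filter.Eventually.of_forall fun t h => absurd h (Real.exp_ne_zero _)) 0 ?_
    have := tendG (a-1) p (half_pos hz)
    refine this.congr fun t => ?_
    rw [Pi.div_apply, eq_div_iff (Real.exp_ne_zero _), show (-z*t) = -(z/2)*t + (-(z/2)*t) by ring,
      Real.exp_add]
    ring

lemma hasDerivG (a p : ℝ) {z : ℝ} (ha : 0 < a) (hz : 0 < z) :
    HasDerivAt (fun z => Gfun a p z) (-(Gfun (a+1) p z)) z := by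
  have key := hasDerivAt_integral_of_dominated_loc_of_deriv_le
      (μ := volume.restrict (Set.Ioi (0:ℝ)))
      (F := fun z t => Real.exp (-z * t) * t ^ (a - 1) * (1 + t) ^ p)
      (F' := fun z t => -(Real.exp (-z * t) * t ^ (a + 1 - 1) * (1 + t) ^ p))
      (x₀ := z) (s := Metric.ball z (z/2))
      (bound := fun t => Real.exp (-(z/2) * t) * t ^ (a + 1 - 1) * (1 + t) ^ p)
      (Metric.ball_mem_nhds z (by linarith))
      (Filter.Eventually.of_forall fun x =>
        (contOnG a p x).aestronglyMeasurable measurableSet_Ioi)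
      (integrableG p ha hz)
      (((contOnG (a+1) p z).aestronglyMeasurable measurableSet_Ioi).neg)
      ?_ (integrableG p (by linarith : (0:ℝ) < a+1) (half_pos hz)) ?_
  · have h2 := key.2
    rwa [MeasureTheory.integral_neg] at h2
  · refine (MeasureTheory.ae_restrict_iff' measurableSet_Ioi).2
      (Filter.Eventually.of_forall fun t ht x hx => ?_)
    have ht0 : (0:ℝ) < t := ht
    have hx2 : z/2 < x := by
      have := Metric.mem_ball.mp hx
      rw [Real.dist_eq, abs_lt] at this
      linarith [this.1]
    have hnn : (0:ℝ) ≤ t ^ (a+1-1) := Real.rpow_nonneg ht0.le _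
    have hnn2 : (0:ℝ) ≤ (1+t) ^ p := Real.rpow_nonneg (by linarith) _
    rw [norm_neg, Real.norm_eq_abs, abs_of_nonneg (by positivity)]
    have hle : Real.exp (-x * t) ≤ Real.exp (-(z/2) * t) :=
      Real.exp_le_exp.2 (by nlinarith)
    exact mul_le_mul_of_nonneg_right (mul_le_mul_of_nonneg_right hle hnn) hnn2
  · refine (MeasureTheory.ae_restrict_iff' measurableSet_Ioi).2
      (Filter.Eventually.of_forall fun t ht x _ => ?_)
    have ht0 : (0:ℝ) < t := ht
    have h1 : HasDerivAt (fun x : ℝ => -x * t) (-t) x := by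
      simpa using ((hasDerivAt_id x).neg.mul_const t)
    have h2 := ((h1.exp.mul_const (t ^ (a-1))).mul_const ((1+t) ^ p))
    refine h2.congr_deriv (Eq.symm ?_)
    show -(Real.exp (-x * t) * t ^ (a + 1 - 1) * (1 + t) ^ p) = _
    rw [show a + 1 - 1 = (a-1) + 1 by ring, Real.rpow_add_one (ne_of_gt ht0)]
    ring

lemma kummerG (a p : ℝ) {z : ℝ} (ha : 0 < a) (hz : 0 < z) :
    -z * Gfun (a+2) p z + (a + p + 1 - z) * Gfun (a+1) p z + a * Gfun a p z = 0 := by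
  set f2 : ℝ → ℝ := fun t => Real.exp (-z * t) * t ^ (a + 2 - 1) * (1 + t) ^ p with hf2
  set f1 : ℝ → ℝ := fun t => Real.exp (-z * t) * t ^ (a + 1 - 1) * (1 + t) ^ p with hf1
  set f0 : ℝ → ℝ := fun t => Real.exp (-z * t) * t ^ (a - 1) * (1 + t) ^ p with hf0
  set g : ℝ → ℝ := fun t => Real.exp (-z * t) * t ^ a * (1 + t) ^ (p + 1) with hg
  set g' : ℝ → ℝ := fun t => -z * f2 t + (a + p + 1 - z) * f1 t + a * f0 t with hg'
  have hderiv : ∀ t ∈ Set.Ioi (0:ℝ), HasDerivAt g (g' t) t := by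
    intro t ht
    have ht0 : (0:ℝ) < t := ht
    have h1 : HasDerivAt (fun t : ℝ => Real.exp (-z * t)) (Real.exp (-z * t) * (-z)) t := by
      have : HasDerivAt (fun t : ℝ => -z * t) (-z) t := by
        simpa using (hasDerivAt_id t).const_mul (-z)
      exact this.exp
    have h2 : HasDerivAt (fun t : ℝ => t ^ a) (a * t ^ (a - 1)) t :=
      Real.hasDerivAt_rpow_const (Or.inl (ne_of_gt ht0))
    have h3 : HasDerivAt (fun t : ℝ => (1 + t) ^ (p + 1)) ((p+1) * (1 + t) ^ p) t := by
      have hb : HasDerivAt (fun t : ℝ => 1 + t) 1 t := by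
        simpa using (hasDerivAt_id t).const_add 1
      have hr : HasDerivAt (fun y : ℝ => y ^ (p+1)) ((p+1) * (1+t) ^ (p+1-1)) (1+t) :=
        Real.hasDerivAt_rpow_const (Or.inl (by positivity))
      have := hr.comp t hb
      rw [add_sub_cancel_right, mul_one] at this
      exact this
    have h := (h1.mul h2).mul h3
    refine h.congr_deriv ?_
    simp only [hg', hf2, hf1, hf0, Pi.mul_apply]
    rw [show a + 2 - 1 = (a-1) + 1 + 1 by ring, show a + 1 - 1 = (a - 1) + 1 by ring,
      Real.rpow_add_one (ne_of_gt ht0), Real.rpow_add_one (ne_of_gt ht0),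
      show a = (a-1)+1 by ring]
    rw [Real.rpow_add_one (ne_of_gt ht0), Real.rpow_add_one (ne_of_gt (by linarith : (0:ℝ) < 1 + t))]
    ring
  have hcont : ContinuousWithinAt g (Set.Ici (0:ℝ)) 0 := by
    apply ContinuousAt.continuousWithinAt
    have h1 : ContinuousAt (fun t : ℝ => Real.exp (-z * t)) 0 :=
      (Real.continuous_exp.comp (continuous_const.mul continuous_id)).continuousAt
    have h2 : ContinuousAt (fun t : ℝ => t ^ a) 0 :=
      Real.continuousAt_rpow_const _ _ (Or.inr ha.le)
    have h3 : ContinuousAt (fun t : ℝ => (1 + t) ^ (p+1)) 0 := by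
      have : ContinuousAt (fun y : ℝ => y ^ (p+1)) (1 + 0) :=
        Real.continuousAt_rpow_const _ _ (Or.inl (by norm_num))
      exact this.comp (continuous_const.add continuous_id).continuousAt
    exact (h1.mul h2).mul h3
  have htend : Tendsto g atTop (𝓝 0) := by
    have := tendG a (p+1) hz
    exact this
  have hint2 : IntegrableOn f2 (Set.Ioi (0:ℝ)) := integrableG p (by linarith : (0:ℝ) < a + 2) hz
  have hint1 : IntegrableOn f1 (Set.Ioi (0:ℝ)) := integrableG p (by linarith : (0:ℝ) < a + 1) hz
  have hint0 : IntegrableOn f0 (Set.Ioi (0:ℝ)) := integrableG p ha hz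
  have hintg' : IntegrableOn g' (Set.Ioi (0:ℝ)) :=
    (((hint2.const_mul (-z)).add (hint1.const_mul (a+p+1-z))).add (hint0.const_mul a))
  have hFTC := MeasureTheory.integral_Ioi_of_hasDerivAt_of_tendsto hcont hderiv hintg' htend
  have hg0 : g 0 = 0 := by
    simp [hg, Real.zero_rpow (ne_of_gt ha)]
  rw [hg0, sub_zero] at hFTC
  have hsum : ∫ t in Set.Ioi (0:ℝ), g' t =
      -z * Gfun (a+2) p z + (a + p + 1 - z) * Gfun (a+1) p z + a * Gfun a p z := by
    rw [hg']
    show (∫ t in Set.Ioi (0:ℝ), (-z * f2 t + (a + p + 1 - z) * f1 t + a * f0 t)) = _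
    have hI2 : Integrable (fun t => -z * f2 t) (volume.restrict (Set.Ioi (0:ℝ))) :=
      hint2.const_mul (-z)
    have hI1 : Integrable (fun t => (a + p + 1 - z) * f1 t) (volume.restrict (Set.Ioi (0:ℝ))) :=
      hint1.const_mul (a+p+1-z)
    have hI0 : Integrable (fun t => a * f0 t) (volume.restrict (Set.Ioi (0:ℝ))) :=
      hint0.const_mul a
    have hI21 : Integrable (fun t => -z * f2 t + (a + p + 1 - z) * f1 t)
        (volume.restrict (Set.Ioi (0:ℝ))) := hI2.add hI1
    rw [MeasureTheory.integral_add hI21 hI0, MeasureTheory.integral_add hI2 hI1,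
      MeasureTheory.integral_const_mul, MeasureTheory.integral_const_mul,
      MeasureTheory.integral_const_mul]
    rfl
  rw [hsum] at hFTC
  linarith [hFTC]


/-- The confluent hypergeometric function of the second kind, defined for `a > 0`, `z > 0`
by its integral representation `U(a,c,z) = (1/Γ(a))·∫₀^∞ e^{−zt} t^{a−1} (1+t)^{c−a−1} dt`. -/
noncomputable def hypergeometricU (a c z : ℝ) : ℝ :=
  (1 / Real.Gamma a) *
    ∫ t in Set.Ioi (0:ℝ), Real.exp (-z * t) * t ^ (a - 1) * (1 + t) ^ (c - a - 1)

/-- Explicit fiber eigenfunctions via the confluent hypergeometric function: with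
`a = 1/2 − λ/(2b) > 0`, the function `v(r) = e^{−br²/4} r^k U(a, k+1, br²/2)` is twice
differentiable on `(0,∞)` and satisfies the fiber ODE at energy `λ`. -/

theorem fiber_eigenfunction_via_U
    (b : ℝ) (hb : 0 < b) (k lam : ℝ) (hlam : lam < b)
    (a : ℝ) (ha : a = 1 / 2 - lam / (2 * b))
    (v : ℝ → ℝ)
    (hv : ∀ r, v r = Real.exp (-b * r ^ 2 / 4) * r ^ k * hypergeometricU a (k + 1) (b * r ^ 2 / 2)) :
    (∀ r > (0:ℝ), DifferentiableAt ℝ v r) ∧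
    (∀ r > (0:ℝ), DifferentiableAt ℝ (deriv v) r) ∧
    (∀ r > (0:ℝ),
      -(deriv (deriv v) r) - deriv v r / r + (k / r - b * r / 2) ^ 2 * v r = lam * v r) := by
  have hveq : v = fun r => Real.exp (-b * r ^ 2 / 4) * r ^ k *
      hypergeometricU a (k + 1) (b * r ^ 2 / 2) := funext hv
  subst hveq
  have ha0 : 0 < a := by
    have h2b : (0:ℝ) < 2 * b := by linarith
    rw [ha, sub_pos, div_lt_iff₀ h2b]
    linarith
  -- U functions
  set p : ℝ := k + 1 - a - 1 with hp
  set U0 : ℝ → ℝ := fun z => hypergeometricU a (k+1) z with hU0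
  set U1 : ℝ → ℝ := fun z => -((1 / Real.Gamma a) * Gfun (a+1) p z) with hU1
  set U2 : ℝ → ℝ := fun z => (1 / Real.Gamma a) * Gfun (a+2) p z with hU2
  have hU0eq : U0 = fun z => (1 / Real.Gamma a) * Gfun a p z := rfl
  have hU0d : ∀ {z : ℝ}, 0 < z → HasDerivAt U0 (U1 z) z := by
    intro z hz
    rw [hU0eq]
    have := (hasDerivG a p ha0 hz).const_mul (1 / Real.Gamma a)
    refine this.congr_deriv ?_
    simp only [hU1]
    ring
  have hU1d : ∀ {z : ℝ}, 0 < z → HasDerivAt U1 (U2 z) z := by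
    intro z hz
    have := ((hasDerivG (a+1) p (by linarith) hz).const_mul (1 / Real.Gamma a)).neg
    refine this.congr_deriv ?_
    rw [hU2, show a + 1 + 1 = a + 2 by ring]
    ring
  have hW : ∀ {z : ℝ}, 0 < z → U2 z = (a * U0 z - (k + 1 - z) * U1 z) / z := by
    intro z hz
    have hg := kummerG a p ha0 hz
    rw [eq_div_iff (ne_of_gt hz), hU2, hU0eq, hU1]
    linear_combination (-(1 / Real.Gamma a)) * hg
  clear hU0eq
  -- calculus part
  set V1 : ℝ → ℝ := fun r => Real.exp (-b * r ^ 2 / 4) *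
      (((-b * r / 2) * r ^ k + k * r ^ (k - 1)) * U0 (b * r ^ 2 / 2)
        + r ^ k * U1 (b * r ^ 2 / 2) * (b * r)) with hV1
  have hE : ∀ r : ℝ, HasDerivAt (fun r : ℝ => Real.exp (-b * r ^ 2 / 4))
      (Real.exp (-b * r ^ 2 / 4) * (-b * r / 2)) r := by
    intro r
    have h : HasDerivAt (fun r : ℝ => -b * r ^ 2 / 4) (-b * r / 2) r := by
      have := ((hasDerivAt_pow 2 r).const_mul (-b)).div_const 4
      refine this.congr_deriv ?_
      push_cast
      ring
    exact h.exp
  have hm : ∀ r : ℝ, HasDerivAt (fun r : ℝ => b * r ^ 2 / 2) (b * r) r := by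
    intro r
    have := ((hasDerivAt_pow 2 r).const_mul b).div_const 2
    refine this.congr_deriv ?_
    push_cast
    ring
  have hmpos : ∀ {r : ℝ}, 0 < r → 0 < b * r ^ 2 / 2 := fun hr => by positivity
  have hderivV : ∀ r, 0 < r → HasDerivAt (fun r => Real.exp (-b * r ^ 2 / 4) * r ^ k *
      hypergeometricU a (k + 1) (b * r ^ 2 / 2)) (V1 r) r := by
    intro r hr
    have hP : HasDerivAt (fun r : ℝ => r ^ k) (k * r ^ (k - 1)) r :=
      Real.hasDerivAt_rpow_const (Or.inl (ne_of_gt hr))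
    have hUc : HasDerivAt (fun r : ℝ => U0 (b * r ^ 2 / 2)) (U1 (b * r ^ 2 / 2) * (b * r)) r :=
      by have := (hU0d (hmpos hr)).comp r (hm r); exact this
    have h := ((hE r).mul hP).mul hUc
    refine h.congr_deriv ?_
    simp only [hV1, Pi.mul_apply]
    ring
  have hdiff1 : ∀ r > (0:ℝ), DifferentiableAt ℝ (fun r => Real.exp (-b * r ^ 2 / 4) * r ^ k *
      hypergeometricU a (k + 1) (b * r ^ 2 / 2)) r := fun r hr =>
    (hderivV r hr).differentiableAt
  have hd1 : ∀ r > (0:ℝ), deriv (fun r => Real.exp (-b * r ^ 2 / 4) * r ^ k *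
      hypergeometricU a (k + 1) (b * r ^ 2 / 2)) r = V1 r := fun r hr => (hderivV r hr).deriv
  set V2 : ℝ → ℝ := fun r => Real.exp (-b * r ^ 2 / 4) * (-b * r / 2) *
      (((-b * r / 2) * r ^ k + k * r ^ (k - 1)) * U0 (b * r ^ 2 / 2)
        + r ^ k * U1 (b * r ^ 2 / 2) * (b * r))
      + Real.exp (-b * r ^ 2 / 4) *
        ( ((-b / 2) * r ^ k + (-b * r / 2) * (k * r ^ (k - 1)) + k * ((k - 1) * r ^ (k - 2)))
            * U0 (b * r ^ 2 / 2)
          + ((-b * r / 2) * r ^ k + k * r ^ (k - 1)) * (U1 (b * r ^ 2 / 2) * (b * r))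
          + (k * r ^ (k - 1)) * U1 (b * r ^ 2 / 2) * (b * r)
          + r ^ k * U2 (b * r ^ 2 / 2) * (b * r) ^ 2
          + r ^ k * U1 (b * r ^ 2 / 2) * b) with hV2
  have hderivV1 : ∀ r, 0 < r → HasDerivAt V1 (V2 r) r := by
    intro r hr
    have hP : HasDerivAt (fun r : ℝ => r ^ k) (k * r ^ (k - 1)) r :=
      Real.hasDerivAt_rpow_const (Or.inl (ne_of_gt hr))
    have hP1 : HasDerivAt (fun r : ℝ => r ^ (k - 1)) ((k - 1) * r ^ (k - 1 - 1)) r :=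
      Real.hasDerivAt_rpow_const (Or.inl (ne_of_gt hr))
    rw [show k - 1 - 1 = k - 2 by ring] at hP1
    have hUc : HasDerivAt (fun r : ℝ => U0 (b * r ^ 2 / 2)) (U1 (b * r ^ 2 / 2) * (b * r)) r :=
      by have := (hU0d (hmpos hr)).comp r (hm r); exact this
    have hU1c : HasDerivAt (fun r : ℝ => U1 (b * r ^ 2 / 2)) (U2 (b * r ^ 2 / 2) * (b * r)) r :=
      by have := (hU1d (hmpos hr)).comp r (hm r); exact this
    have hbr2 : HasDerivAt (fun r : ℝ => -b * r / 2) (-b / 2) r := by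
      have := ((hasDerivAt_id r).const_mul (-b)).div_const 2
      refine this.congr_deriv ?_
      ring
    have hbr : HasDerivAt (fun r : ℝ => b * r) b r := by
      simpa using (hasDerivAt_id r).const_mul b
    have hA := (hbr2.mul hP).add (hP1.const_mul k)
    have hfirst := hA.mul hUc
    have hsecond := (hP.mul hU1c).mul hbr
    have hS := hfirst.add hsecond
    have h := (hE r).mul hS
    refine h.congr_deriv ?_
    simp only [hV2, Pi.mul_apply, Pi.add_apply]
    ring
  have hdiff2 : ∀ r > (0:ℝ), DifferentiableAt ℝ (deriv (fun r => Real.exp (-b * r ^ 2 / 4) *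
      r ^ k * hypergeometricU a (k + 1) (b * r ^ 2 / 2))) r := by
    intro r hr
    have hev : deriv (fun r => Real.exp (-b * r ^ 2 / 4) * r ^ k *
        hypergeometricU a (k + 1) (b * r ^ 2 / 2)) =ᶠ[𝓝 r] V1 :=
      Filter.eventuallyEq_of_mem (Ioi_mem_nhds hr) fun x hx => (hderivV x hx).deriv
    exact (hderivV1 r hr).differentiableAt.congr_of_eventuallyEq hev
  refine ⟨hdiff1, hdiff2, ?_⟩
  intro r hr
  have hev : deriv (fun r => Real.exp (-b * r ^ 2 / 4) * r ^ k *
      hypergeometricU a (k + 1) (b * r ^ 2 / 2)) =ᶠ[𝓝 r] V1 :=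
    Filter.eventuallyEq_of_mem (Ioi_mem_nhds hr) fun x hx => (hderivV x hx).deriv
  have hd2 : deriv (deriv (fun r => Real.exp (-b * r ^ 2 / 4) * r ^ k *
      hypergeometricU a (k + 1) (b * r ^ 2 / 2))) r = V2 r := by
    rw [hev.deriv_eq]
    exact (hderivV1 r hr).deriv
  rw [hd2, hd1 r hr]
  -- final algebra
  have hzpos : 0 < b * r ^ 2 / 2 := hmpos hr
  have hWr := hW hzpos
  have hk1 : r ^ k = r ^ (k - 1) * r := by
    nth_rewrite 1 [show k = (k - 1) + 1 by ring]
    rw [Real.rpow_add hr, Real.rpow_one]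
  have hk2 : r ^ (k - 1) = r ^ (k - 2) * r := by
    nth_rewrite 1 [show k - 1 = (k - 2) + 1 by ring]
    rw [Real.rpow_add hr, Real.rpow_one]
  have hlam' : lam = b - 2*a*b := by
    rw [ha]
    field_simp
    ring
  simp only [hV1, hV2, hU0, hU1, hU2] at hWr ⊢
  rw [hWr, hk1, hk2, hlam']
  have hrne : r ≠ 0 := ne_of_gt hr
  have hbne : b ≠ 0 := ne_of_gt hb
  field_simp
  ring
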